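/- Let H and H' be Hopf algebras over a field k with bijective antipodes, τ a Hopf algebra automorphism of H of finite order r, and τ' a Hopf algebra automorphism of H' of finite order r'. Then γ = τ ⊗ τ' is a Hopf algebra automorphism of H ⊗ H' of order lcm(r, r'), and exp_γ(H ⊗ H') = lcm(d_τ, d_{τ'}) / lcm(r, r'), where d_τ = r·exp_τ(H) and d_{τ'} = r'·exp_{τ'}(H'). In particular, if r = r', then exp_γ(H ⊗ H') = lcm(exp_τ(H), exp_{τ'}(H')). -/

import Mathlib

open scoped TensorProduct

noncomputable section

namespace TwistedExponent

section Bialg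

variable (k H : Type*) [CommRing k] [Ring H] [Bialgebra k H]

/-- The convolution product of two linear endomorphisms of a bialgebra:
`f * g = μ ∘ (f ⊗ g) ∘ Δ`. -/
def conv (f g : H →ₗ[k] H) : H →ₗ[k] H :=
  LinearMap.mul' k H ∘ₗ TensorProduct.map f g ∘ₗ Coalgebra.comul

/-- The convolution unit `η ∘ ε`, i.e. `h ↦ ε(h)·1`. -/
def convOne : H →ₗ[k] H := Algebra.linearMap k H ∘ₗ Coalgebra.counit

/-- `gamma T m` is the map `Γ_m = μ^m ∘ (Id ⊗ T ⊗ T² ⊗ ⋯ ⊗ T^{m-1}) ∘ Δ^{m-1}`, expressed as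
the convolution product `Id * T * T² * ⋯ * T^{m-1}` (with `gamma T 0` the convolution unit). -/
def gamma (T : H →ₗ[k] H) : ℕ → (H →ₗ[k] H)
  | 0 => convOne k H
  | (m + 1) => conv k H (gamma T m) (T ^ m)

/-- `f : H → H` has exact (finite) order `r`. -/
def HasOrder (τ : H → H) (r : ℕ) : Prop :=
  0 < r ∧ τ^[r] = id ∧ ∀ s : ℕ, 0 < s → s < r → τ^[s] ≠ id

end Bialg

section Hopf

variable (k H : Type*) [CommRing k] [Ring H] [HopfAlgebra k H]

/-- The inverse of the antipode, given that the antipode is bijective. -/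
def antipodeInv (hS : Function.Bijective (HopfAlgebra.antipode (R := k) (A := H))) :
    H →ₗ[k] H :=
  (LinearEquiv.ofBijective (HopfAlgebra.antipode (R := k) (A := H)) hS).symm

/-- The map `S⁻² ∘ τ`. -/
def twist (hS : Function.Bijective (HopfAlgebra.antipode (R := k) (A := H)))
    (τ : H →ₗ[k] H) : H →ₗ[k] H :=
  antipodeInv k H hS ∘ₗ antipodeInv k H hS ∘ₗ τ

end Hopf

end TwistedExponent

open TwistedExponent

universe u


namespace Aux12

variable {k C A : Type*} [CommRing k] [AddCommGroup C] [Module k C] [Coalgebra k C]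
  [Ring A] [Algebra k A]

/-- general convolution -/
def cv (f g : C →ₗ[k] A) : C →ₗ[k] A :=
  LinearMap.mul' k A ∘ₗ TensorProduct.map f g ∘ₗ Coalgebra.comul

def cvOne : C →ₗ[k] A := Algebra.linearMap k A ∘ₗ Coalgebra.counit

lemma cvOne_apply (a : C) : cvOne (k := k) (A := A) a = algebraMap k A (Coalgebra.counit a) := rfl

lemma cv_repr {ι : Type*} (f g : C →ₗ[k] A) (a : C) (repr : Coalgebra.Repr k a ι) :
    cv f g a = ∑ i ∈ repr.index, f (repr.left i) * g (repr.right i) := by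
  simp only [cv, LinearMap.comp_apply, ← repr.eq, map_sum, TensorProduct.map_tmul,
    LinearMap.mul'_apply]

lemma cv_cvOne (f : C →ₗ[k] A) : cv f cvOne = f := by
  ext a
  have repr := Coalgebra.Repr.arbitrary k a
  have h := Coalgebra.sum_tmul_counit_eq (R := k) repr
  apply_fun (TensorProduct.rid k C) at h
  simp only [map_sum, TensorProduct.rid_tmul, one_smul] at h
  rw [cv_repr f _ a repr]
  calc ∑ i ∈ repr.index, f (repr.left i) * cvOne (repr.right i)
      = ∑ i ∈ repr.index, f (Coalgebra.counit (R := k) (repr.right i) • repr.left i) := by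
        refine Finset.sum_congr rfl fun i _ => ?_
        rw [cvOne_apply, ← Algebra.commutes, ← Algebra.smul_def, map_smul]
    _ = f a := by rw [← map_sum, h]

lemma cvOne_cv (g : C →ₗ[k] A) : cv cvOne g = g := by
  ext a
  have repr := Coalgebra.Repr.arbitrary k a
  have h := Coalgebra.sum_counit_tmul_eq (R := k) repr
  apply_fun (TensorProduct.lid k C) at h
  simp only [map_sum, TensorProduct.lid_tmul, one_smul] at h
  rw [cv_repr _ g a repr]
  calc ∑ i ∈ repr.index, cvOne (repr.left i) * g (repr.right i)
      = ∑ i ∈ repr.index, g (Coalgebra.counit (R := k) (repr.left i) • repr.right i) := by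
        refine Finset.sum_congr rfl fun i _ => ?_
        rw [cvOne_apply, ← Algebra.smul_def, map_smul]
    _ = g a := by rw [← map_sum, h]

lemma cv_assoc (f g h : C →ₗ[k] A) : cv (cv f g) h = cv f (cv g h) := by
  ext a
  have r0 := Coalgebra.Repr.arbitrary k a
  have a₁ : (i : r0.ι) → Coalgebra.Repr k (r0.left i) (C × C) := fun i => Coalgebra.Repr.arbitrary k _
  have a₂ : (i : r0.ι) → Coalgebra.Repr k (r0.right i) (C × C) := fun i => Coalgebra.Repr.arbitrary k _
  have key := Coalgebra.sum_map_tmul_tmul_eq (f := f) (g := g) (h := h) a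
    (repr := r0) (a₁ := a₁) (a₂ := a₂)
  apply_fun (LinearMap.mul' k A ∘ₗ (LinearMap.mul' k A).lTensor A) at key
  simp only [map_sum, LinearMap.comp_apply, LinearMap.lTensor_tmul, LinearMap.mul'_apply] at key
  rw [cv_repr (cv f g) h a r0, cv_repr f (cv g h) a r0]
  have lhs : ∑ i ∈ r0.index, f (r0.left i) * cv g h (r0.right i)
      = ∑ i ∈ r0.index, ∑ j ∈ (a₂ i).index,
        f (r0.left i) * (g ((a₂ i).left j) * h ((a₂ i).right j)) := by
    refine Finset.sum_congr rfl fun i _ => ?_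
    rw [cv_repr g h _ (a₂ i), Finset.mul_sum]
  have rhs : ∑ i ∈ r0.index, cv f g (r0.left i) * h (r0.right i)
      = ∑ i ∈ r0.index, ∑ j ∈ (a₁ i).index,
        f ((a₁ i).left j) * (g ((a₁ i).right j) * h (r0.right i)) := by
    refine Finset.sum_congr rfl fun i _ => ?_
    rw [cv_repr f g _ (a₁ i), Finset.sum_mul]
    exact Finset.sum_congr rfl fun j _ => (mul_assoc _ _ _)
  rw [lhs, rhs, key]

lemma comp_cv (T : A →ₗ[k] A) (hT : ∀ x y : A, T (x * y) = T x * T y) (f g : C →ₗ[k] A) :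
    T ∘ₗ cv f g = cv (T ∘ₗ f) (T ∘ₗ g) := by
  ext a
  have repr := Coalgebra.Repr.arbitrary k a
  rw [LinearMap.comp_apply, cv_repr f g a repr, cv_repr _ _ a repr, map_sum]
  exact Finset.sum_congr rfl fun i _ => hT _ _

lemma comp_cvOne (T : A →ₗ[k] A) (hT1 : T 1 = 1) :
    T ∘ₗ cvOne (k := k) (C := C) (A := A) = cvOne := by
  ext a
  show T ((algebraMap k A) (Coalgebra.counit a)) = (algebraMap k A) (Coalgebra.counit a)
  rw [Algebra.algebraMap_eq_smul_one (Coalgebra.counit a), map_smul, hT1,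
    ← Algebra.algebraMap_eq_smul_one]


section TensorRepr

variable {k A B : Type*} [CommRing k] [AddCommGroup A] [Module k A] [CoalgebraStruct k A]
  [AddCommGroup B] [Module k B] [CoalgebraStruct k B]

/-- A representation of `comul (a ⊗ₜ b)` built from representations of `comul a`, `comul b`. -/
def reprTmul {ι κ : Type*} {a : A} {b : B} (ra : Coalgebra.Repr k a ι)
    (rb : Coalgebra.Repr k b κ) :
    Coalgebra.Repr k (a ⊗ₜ[k] b) (ι × κ) where
  index := ra.index ×ˢ rb.index
  left := fun p => ra.left p.1 ⊗ₜ rb.left p.2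
  right := fun p => ra.right p.1 ⊗ₜ rb.right p.2
  eq := by
    have : CoalgebraStruct.comul (R := k) (a ⊗ₜ[k] b) =
        TensorProduct.tensorTensorTensorComm k A A B B
          (TensorProduct.map CoalgebraStruct.comul CoalgebraStruct.comul (a ⊗ₜ b)) := rfl
    rw [this, TensorProduct.map_tmul, ← ra.eq, ← rb.eq, TensorProduct.sum_tmul]
    simp_rw [TensorProduct.tmul_sum, map_sum, TensorProduct.tensorTensorTensorComm_tmul]
    rw [Finset.sum_product]

@[simp] lemma reprTmul_index {ι κ : Type*} {a : A} {b : B} (ra : Coalgebra.Repr k a ι)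
    (rb : Coalgebra.Repr k b κ) : (reprTmul ra rb).index = ra.index ×ˢ rb.index := rfl

lemma counit_tmul (a : A) (b : B) :
    Coalgebra.counit (R := k) (a ⊗ₜ[k] b) =
      Coalgebra.counit (R := k) a * Coalgebra.counit (R := k) b := by simp [mul_comm]

end TensorRepr

section MulRepr

variable {k H : Type*} [CommRing k] [Ring H] [Bialgebra k H]

/-- A representation of `comul (a * b)` built from representations of `comul a`, `comul b`. -/
def reprMul {ι κ : Type*} {a b : H} (ra : Coalgebra.Repr k a ι)
    (rb : Coalgebra.Repr k b κ) :
    Coalgebra.Repr k (a * b) (ι × κ) where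
  index := ra.index ×ˢ rb.index
  left := fun p => ra.left p.1 * rb.left p.2
  right := fun p => ra.right p.1 * rb.right p.2
  eq := by
    rw [Bialgebra.comul_mul, ← ra.eq, ← rb.eq, Finset.sum_mul_sum]
    simp_rw [Algebra.TensorProduct.tmul_mul_tmul]
    rw [Finset.sum_product]

end MulRepr


section Antipode

variable {k H : Type u} [CommRing k] [Ring H] [HopfAlgebra k H]

open HopfAlgebra

lemma antipode_one_eq : antipode (R := k) (A := H) 1 = 1 := by
  have h := HopfAlgebra.mul_antipode_rTensor_comul_apply (R := k) (A := H) (1 : H)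
  simpa [Algebra.TensorProduct.one_def] using h

lemma antipode_mul_anti (a b : H) :
    antipode (R := k) (a * b) = antipode (R := k) b * antipode (R := k) a := by
  classical
  set S : H →ₗ[k] H := antipode (R := k) (A := H) with hSdef
  set F : H ⊗[k] H →ₗ[k] H := LinearMap.mul' k H with hF
  set G : H ⊗[k] H →ₗ[k] H :=
    LinearMap.mul' k H ∘ₗ TensorProduct.map S S ∘ₗ (TensorProduct.comm k H H).toLinearMap with hG
  set SF : H ⊗[k] H →ₗ[k] H := S ∘ₗ LinearMap.mul' k H with hSF
  have h1 : cv F SF = cvOne := by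
    apply TensorProduct.ext'
    intro x y
    have rx := Coalgebra.Repr.arbitrary k x
    have ry := Coalgebra.Repr.arbitrary k y
    rw [cv_repr F SF _ (reprTmul rx ry)]
    have key := HopfAlgebra.mul_antipode_lTensor_comul_apply (R := k) (A := H) (x * y)
    rw [← (reprMul rx ry).eq, map_sum, map_sum] at key
    simp only [LinearMap.lTensor_tmul, LinearMap.mul'_apply] at key
    simp only [reprMul] at key
    simp only [hF, hSF, reprTmul, LinearMap.mul'_apply, LinearMap.comp_apply,
      TensorProduct.map_tmul]
    rw [key, Bialgebra.counit_mul, cvOne_apply, counit_tmul, map_mul]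
  have h2 : cv G F = cvOne := by
    apply TensorProduct.ext'
    intro x y
    have rx := Coalgebra.Repr.arbitrary k x
    have ry := Coalgebra.Repr.arbitrary k y
    rw [cv_repr G F _ (reprTmul rx ry), cvOne_apply, counit_tmul]
    simp only [hG, hF, reprTmul, LinearMap.comp_apply, LinearEquiv.coe_coe,
      TensorProduct.comm_tmul, TensorProduct.map_tmul, LinearMap.mul'_apply]
    rw [Finset.sum_product, Finset.sum_comm]
    have inner : ∀ j ∈ ry.index,
        ∑ i ∈ rx.index, S (ry.left j) * S (rx.left i) * (rx.right i * ry.right j)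
          = Coalgebra.counit (R := k) x • (S (ry.left j) * ry.right j) := by
      intro j _
      have step : ∀ i, S (ry.left j) * S (rx.left i) * (rx.right i * ry.right j)
          = S (ry.left j) * (S (rx.left i) * rx.right i * ry.right j) := by
        intro i
        simp only [mul_assoc]
      simp_rw [step]
      rw [← Finset.mul_sum, ← Finset.sum_mul, HopfAlgebra.sum_antipode_mul_eq_algebraMap_counit rx,
        ← Algebra.smul_def, mul_smul_comm]
    rw [Finset.sum_congr rfl inner, ← Finset.smul_sum, HopfAlgebra.sum_antipode_mul_eq_algebraMap_counit ry,
      Algebra.smul_def, ← map_mul]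
  have hGSF : G = SF := by
    calc G = cv G cvOne := (cv_cvOne G).symm
      _ = cv G (cv F SF) := by rw [h1]
      _ = cv (cv G F) SF := (cv_assoc G F SF).symm
      _ = cv cvOne SF := by rw [h2]
      _ = SF := cvOne_cv SF
  have happ := LinearMap.congr_fun hGSF (a ⊗ₜ[k] b)
  simp only [hG, hSF, LinearMap.comp_apply, LinearEquiv.coe_coe, TensorProduct.comm_tmul,
    TensorProduct.map_tmul, LinearMap.mul'_apply] at happ
  exact happ.symm

end Antipode


section Gamma

open TwistedExponent

variable {k H : Type*} [CommRing k] [Ring H] [Bialgebra k H]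

lemma cv_apply_one (f g : H →ₗ[k] H) : cv f g 1 = f 1 * g 1 := by
  simp [cv, Bialgebra.comul_one, Algebra.TensorProduct.one_def]

lemma conv_def (f g : H →ₗ[k] H) : conv k H f g = cv f g := rfl

lemma convOne_def : convOne k H = cvOne := rfl

lemma gamma_zero (T : H →ₗ[k] H) : gamma k H T 0 = convOne k H := rfl

lemma gamma_succ (T : H →ₗ[k] H) (m : ℕ) :
    gamma k H T (m + 1) = conv k H (gamma k H T m) (T ^ m) := rfl

variable (T : H →ₗ[k] H)

lemma pow_mul_eq (hT : ∀ x y : H, T (x * y) = T x * T y) (m : ℕ) :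
    ∀ x y : H, (T ^ m) (x * y) = (T ^ m) x * (T ^ m) y := by
  induction m with
  | zero => intro x y; simp
  | succ n ih =>
    intro x y
    rw [pow_succ', Module.End.mul_apply, Module.End.mul_apply, Module.End.mul_apply, ih, hT]

lemma pow_one_eq (hT1 : T 1 = 1) (m : ℕ) : (T ^ m) 1 = 1 := by
  induction m with
  | zero => simp
  | succ n ih => rw [pow_succ', Module.End.mul_apply, ih, hT1]

lemma gamma_one_apply (hT1 : T 1 = 1) (m : ℕ) : gamma k H T m 1 = 1 := by
  induction m with
  | zero =>
    rw [gamma_zero, convOne_def, cvOne_apply, Bialgebra.counit_one, map_one]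
  | succ n ih =>
    rw [gamma_succ, conv_def, cv_apply_one, ih, pow_one_eq T hT1, one_mul]

lemma gamma_add (hT : ∀ x y : H, T (x * y) = T x * T y) (hT1 : T 1 = 1) (m n : ℕ) :
    gamma k H T (m + n) = conv k H (gamma k H T m) ((T ^ m) ∘ₗ gamma k H T n) := by
  induction n with
  | zero =>
    rw [Nat.add_zero, gamma_zero, convOne_def, comp_cvOne _ (pow_one_eq T hT1 m), conv_def,
      ← convOne_def, convOne_def, cv_cvOne]
  | succ n ih =>
    have hstep : (T ^ m) ∘ₗ (gamma k H T (n + 1) : H →ₗ[k] H)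
        = cv ((T ^ m) ∘ₗ gamma k H T n) (T ^ (m + n)) := by
      rw [gamma_succ, conv_def, comp_cv (T ^ m) (pow_mul_eq T hT m), pow_add,
        Module.End.mul_eq_comp]
    show gamma k H T ((m + n) + 1) = _
    rw [gamma_succ, ih, conv_def, conv_def, conv_def, cv_assoc, hstep]

lemma gamma_mem_add (hT : ∀ x y : H, T (x * y) = T x * T y) (hT1 : T 1 = 1) (m n : ℕ)
    (hm : gamma k H T m = convOne k H) (hn : gamma k H T n = convOne k H) :
    gamma k H T (m + n) = convOne k H := by
  rw [gamma_add T hT hT1, hm, hn, convOne_def, comp_cvOne _ (pow_one_eq T hT1 m), conv_def,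
    cv_cvOne]

lemma gamma_mem_sub (hT : ∀ x y : H, T (x * y) = T x * T y) (hT1 : T 1 = 1)
    (hTbij : Function.Bijective T) (m n : ℕ)
    (hm : gamma k H T m = convOne k H) (hmn : gamma k H T (m + n) = convOne k H) :
    gamma k H T n = convOne k H := by
  have h := gamma_add T hT hT1 m n
  rw [hm, hmn, conv_def, convOne_def, cvOne_cv] at h
  -- h : cvOne = (T ^ m) ∘ₗ gamma k H T n
  have hinj : Function.Injective ⇑(T ^ m) := by
    rw [Module.End.coe_pow]
    exact Function.Injective.iterate hTbij.injective m
  ext a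
  apply hinj
  have e1 : (T ^ m) (gamma k H T n a) = cvOne (k := k) (C := H) (A := H) a := by
    rw [← LinearMap.comp_apply, ← h]
  rw [e1, convOne_def]
  have e2 := comp_cvOne (k := k) (C := H) (T ^ m) (pow_one_eq T hT1 m)
  exact (LinearMap.congr_fun e2 a).symm

end Gamma

section Twist

open TwistedExponent HopfAlgebra

variable {k H : Type u} [CommRing k] [Ring H] [HopfAlgebra k H]
  (hS : Function.Bijective (antipode (R := k) (A := H)))

lemma antipode_antipodeInv (x : H) : antipode (R := k) (antipodeInv k H hS x) = x :=
  (LinearEquiv.ofBijective (antipode (R := k) (A := H)) hS).apply_symm_apply x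

lemma antipodeInv_one : antipodeInv k H hS 1 = 1 := by
  apply hS.injective
  rw [antipode_antipodeInv, antipode_one_eq]

lemma antipodeInv_mul (x y : H) :
    antipodeInv k H hS (x * y) = antipodeInv k H hS y * antipodeInv k H hS x := by
  apply hS.injective
  rw [antipode_antipodeInv, antipode_mul_anti, antipode_antipodeInv, antipode_antipodeInv]

lemma antipodeInv_bijective : Function.Bijective (antipodeInv k H hS) :=
  (LinearEquiv.ofBijective (antipode (R := k) (A := H)) hS).symm.bijective

variable (τ : H →ₗ[k] H)

lemma twist_one (hτ1 : τ 1 = 1) : twist k H hS τ 1 = 1 := by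
  simp only [twist, LinearMap.comp_apply, hτ1, antipodeInv_one]

lemma twist_mul (hτ : ∀ x y : H, τ (x * y) = τ x * τ y) (x y : H) :
    twist k H hS τ (x * y) = twist k H hS τ x * twist k H hS τ y := by
  simp only [twist, LinearMap.comp_apply, hτ, antipodeInv_mul]

lemma twist_bijective (hτ : Function.Bijective τ) : Function.Bijective (twist k H hS τ) := by
  have h1 := antipodeInv_bijective (k := k) (H := H) hS
  exact h1.comp (h1.comp hτ)

end Twist


section TensorSide

open TwistedExponent

variable {k H H' : Type u} [CommRing k] [Ring H] [Bialgebra k H] [Ring H'] [Bialgebra k H']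

lemma convOne_tensor :
    convOne k (H ⊗[k] H') = TensorProduct.map (convOne k H) (convOne k H') := by
  apply TensorProduct.ext'
  intro a b
  rw [TensorProduct.map_tmul, convOne_def, convOne_def, convOne_def, cvOne_apply, cvOne_apply,
    cvOne_apply, counit_tmul, map_mul, Algebra.TensorProduct.algebraMap_apply,
    Algebra.TensorProduct.algebraMap_apply', Algebra.TensorProduct.tmul_mul_tmul, mul_one,
    one_mul]

lemma cv_map (f f' : H →ₗ[k] H) (g g' : H' →ₗ[k] H') :
    cv (TensorProduct.map f g) (TensorProduct.map f' g')
      = TensorProduct.map (cv f f') (cv g g') := by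
  apply TensorProduct.ext'
  intro a b
  have ra := Coalgebra.Repr.arbitrary k a
  have rb := Coalgebra.Repr.arbitrary k b
  rw [cv_repr _ _ _ (reprTmul ra rb), TensorProduct.map_tmul, cv_repr f f' a ra,
    cv_repr g g' b rb, TensorProduct.sum_tmul]
  simp_rw [TensorProduct.tmul_sum]
  simp only [reprTmul, TensorProduct.map_tmul, Algebra.TensorProduct.tmul_mul_tmul]
  rw [Finset.sum_product]

lemma map_pow_eq (T : H →ₗ[k] H) (T' : H' →ₗ[k] H') (n : ℕ) :
    (TensorProduct.map T T') ^ n = TensorProduct.map (T ^ n) (T' ^ n) := by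
  induction n with
  | zero => simp [TensorProduct.map_id]
  | succ m ih =>
    rw [pow_succ', pow_succ', pow_succ', Module.End.mul_eq_comp, Module.End.mul_eq_comp,
      Module.End.mul_eq_comp, ih, TensorProduct.map_comp]

lemma gamma_tensor (T : H →ₗ[k] H) (T' : H' →ₗ[k] H') (n : ℕ) :
    gamma k (H ⊗[k] H') (TensorProduct.map T T') n
      = TensorProduct.map (gamma k H T n) (gamma k H' T' n) := by
  induction n with
  | zero => rw [gamma_zero, gamma_zero, gamma_zero, convOne_tensor]
  | succ m ih =>
    rw [gamma_succ, gamma_succ, gamma_succ, conv_def, conv_def, conv_def, ih, map_pow_eq,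
      cv_map]

lemma map_eq_components (f f₀ : H →ₗ[k] H) (g g₀ : H' →ₗ[k] H')
    (h : TensorProduct.map f g = TensorProduct.map f₀ g₀)
    (hf : f 1 = 1) (hf₀ : f₀ 1 = 1) (hg : g 1 = 1) (hg₀ : g₀ 1 = 1) :
    f = f₀ ∧ g = g₀ := by
  constructor
  · ext a
    have h1 := LinearMap.congr_fun h (a ⊗ₜ[k] 1)
    rw [TensorProduct.map_tmul, TensorProduct.map_tmul, hg, hg₀] at h1
    have h2 := congrArg (fun z : H ⊗[k] H' => (TensorProduct.rid k H)
      ((LinearMap.lTensor H (Coalgebra.counit (R := k) (A := H'))) z)) h1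
    simpa [Bialgebra.counit_one] using h2
  · ext b
    have h1 := LinearMap.congr_fun h ((1 : H) ⊗ₜ[k] b)
    rw [TensorProduct.map_tmul, TensorProduct.map_tmul, hf, hf₀] at h1
    have h2 := congrArg (fun z : H ⊗[k] H' => (TensorProduct.lid k H')
      ((LinearMap.rTensor H' (Coalgebra.counit (R := k) (A := H))) z)) h1
    simpa [Bialgebra.counit_one] using h2

end TensorSide


section NumberTheory

lemma convOne_one {k H : Type*} [CommRing k] [Ring H] [Bialgebra k H] :
    TwistedExponent.convOne k H 1 = 1 := by
  rw [convOne_def, cvOne_apply, Bialgebra.counit_one, map_one]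

lemma hasOrder_dvd {α : Type*} {f : α → α} {r : ℕ}
    (h : TwistedExponent.HasOrder α f r) {s : ℕ} (hs : f^[s] = id) : r ∣ s := by
  obtain ⟨hr, hid, hmin⟩ := h
  rcases Nat.eq_zero_or_pos (s % r) with h0 | hpos
  · exact Nat.dvd_of_mod_eq_zero h0
  · exfalso
    apply hmin (s % r) hpos (Nat.mod_lt _ hr)
    have hiter : f^[s] = f^[s % r] := by
      conv_lhs => rw [← Nat.mod_add_div s r]
      rw [Function.iterate_add, Function.iterate_mul, hid, Function.iterate_id]
      exact Function.comp_id _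
    rw [← hiter, hs]

lemma hasOrder_iterate {α : Type*} {f : α → α} {r : ℕ}
    (h : TwistedExponent.HasOrder α f r) {s : ℕ} (hdvd : r ∣ s) : f^[s] = id := by
  obtain ⟨c, rfl⟩ := hdvd
  rw [Function.iterate_mul, h.2.1, Function.iterate_id]

lemma exists_generator (M : Set ℕ) (h0 : 0 ∈ M)
    (hadd : ∀ m ∈ M, ∀ n ∈ M, m + n ∈ M)
    (hsub : ∀ m ∈ M, ∀ n : ℕ, m + n ∈ M → n ∈ M)
    (hne : ∃ m, 0 < m ∧ m ∈ M) :
    ∃ g : ℕ, 0 < g ∧ ∀ m : ℕ, m ∈ M ↔ g ∣ m := by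
  classical
  obtain ⟨hgpos, hgmem⟩ := Nat.find_spec hne
  refine ⟨Nat.find hne, hgpos, fun m => ⟨?_, ?_⟩⟩
  · set g := Nat.find hne with hg
    induction m using Nat.strong_induction_on with
    | _ m ih =>
      intro hm
      rcases Nat.eq_zero_or_pos m with rfl | hmpos
      · exact dvd_zero g
      · have hge : g ≤ m := Nat.find_min' hne ⟨hmpos, hm⟩
        have hsub' : m - g ∈ M := hsub g hgmem (m - g) (by rwa [Nat.add_sub_cancel' hge])
        have hdvd : g ∣ m - g := ih (m - g) (Nat.sub_lt hmpos hgpos) hsub'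
        have : m = g + (m - g) := (Nat.add_sub_cancel' hge).symm
        rw [this]
        exact dvd_add dvd_rfl hdvd
  · rintro ⟨c, rfl⟩
    induction c with
    | zero => simpa using h0
    | succ n ih =>
      have : Nat.find hne * (n + 1) = Nat.find hne * n + Nat.find hne := by ring
      rw [this]
      exact hadd _ ih _ hgmem

lemma least_mul_eq_lcm {g r e : ℕ} (hg : 0 < g) (hrpos : 0 < r)
    (hl : IsLeast {n : ℕ | 0 < n ∧ g ∣ n * r} e) : r * e = Nat.lcm g r := by
  obtain ⟨⟨hepos, hedvd⟩, hmin⟩ := hl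
  have h1 : Nat.lcm g r ∣ e * r := Nat.lcm_dvd hedvd ⟨e, mul_comm e r⟩
  have hc : Nat.lcm g r / r * r = Nat.lcm g r := Nat.div_mul_cancel (Nat.dvd_lcm_right g r)
  have hlcmpos : 0 < Nat.lcm g r := Nat.pos_of_ne_zero (Nat.lcm_ne_zero hg.ne' hrpos.ne')
  have hcpos : 0 < Nat.lcm g r / r := by
    rcases Nat.eq_zero_or_pos (Nat.lcm g r / r) with h | h
    · rw [h, zero_mul] at hc; omega
    · exact h
  have hcmem : Nat.lcm g r / r ∈ {n : ℕ | 0 < n ∧ g ∣ n * r} :=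
    ⟨hcpos, by rw [hc]; exact Nat.dvd_lcm_left g r⟩
  have hle : e * r ≤ Nat.lcm g r := by
    calc e * r ≤ Nat.lcm g r / r * r := Nat.mul_le_mul_right r (hmin hcmem)
    _ = Nat.lcm g r := hc
  have hge : Nat.lcm g r ≤ e * r := Nat.le_of_dvd (Nat.mul_pos hepos hrpos) h1
  rw [mul_comm r e]
  omega

lemma lcm_lcm_comm (g r g' r' : ℕ) :
    Nat.lcm (Nat.lcm g r) (Nat.lcm g' r') = Nat.lcm (Nat.lcm g g') (Nat.lcm r r') := by
  apply Nat.dvd_antisymm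
  · apply Nat.lcm_dvd <;> apply Nat.lcm_dvd
    · exact (Nat.dvd_lcm_left g g').trans (Nat.dvd_lcm_left _ _)
    · exact (Nat.dvd_lcm_left r r').trans (Nat.dvd_lcm_right _ _)
    · exact (Nat.dvd_lcm_right g g').trans (Nat.dvd_lcm_left _ _)
    · exact (Nat.dvd_lcm_right r r').trans (Nat.dvd_lcm_right _ _)
  · apply Nat.lcm_dvd <;> apply Nat.lcm_dvd
    · exact (Nat.dvd_lcm_left g r).trans (Nat.dvd_lcm_left _ _)
    · exact (Nat.dvd_lcm_left g' r').trans (Nat.dvd_lcm_right _ _)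
    · exact (Nat.dvd_lcm_right g r).trans (Nat.dvd_lcm_left _ _)
    · exact (Nat.dvd_lcm_right g' r').trans (Nat.dvd_lcm_right _ _)

end NumberTheory

end Aux12

open Aux12

/-- Let `H`, `H'` be Hopf algebras over a field `k` with bijective antipodes,
`τ` a Hopf algebra automorphism of `H` of finite order `r` and `τ'` one of `H'` of finite order
`r'`.  Then `γ = τ ⊗ τ'` is a Hopf algebra automorphism of `H ⊗ H'` of order `lcm(r,r')`, and
`exp_γ(H ⊗ H') = lcm(d_τ, d_{τ'}) / lcm(r, r')` where `d_τ = r·exp_τ(H)` and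
`d_{τ'} = r'·exp_{τ'}(H')`.  (On the tensor product Hopf algebra the antipode is `S ⊗ S'`, so
the twist map `(S ⊗ S')⁻² ∘ (τ ⊗ τ')` is `(S⁻²τ) ⊗ (S'⁻²τ')`.)  In particular, if `r = r'`
then `exp_γ(H ⊗ H') = lcm(exp_τ(H), exp_{τ'}(H'))`. -/
theorem stmt12 {k H H' : Type u} [Field k] [Ring H] [HopfAlgebra k H] [Ring H']
    [HopfAlgebra k H']
    (hS : Function.Bijective (HopfAlgebra.antipode (R := k) (A := H)))
    (hS' : Function.Bijective (HopfAlgebra.antipode (R := k) (A := H')))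
    (τ : H ≃ₐc[k] H) (r : ℕ) (hr : HasOrder H (⇑τ) r)
    (τ' : H' ≃ₐc[k] H') (r' : ℕ) (hr' : HasOrder H' (⇑τ') r')
    (e : ℕ) (he : IsLeast {n : ℕ | 0 < n ∧
      gamma k H (twist k H hS (τ : H →ₗ[k] H)) (n * r) = convOne k H} e)
    (e' : ℕ) (he' : IsLeast {n : ℕ | 0 < n ∧
      gamma k H' (twist k H' hS' (τ' : H' →ₗ[k] H')) (n * r') = convOne k H'} e') :
    (∀ x : H ⊗[k] H',
      TensorProduct.map ((τ : H →ₗ[k] H)) ((τ' : H' →ₗ[k] H')) x =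
        Bialgebra.TensorProduct.map τ.toBialgHom τ'.toBialgHom x) ∧
    HasOrder (H ⊗[k] H')
      (⇑(TensorProduct.map ((τ : H →ₗ[k] H)) ((τ' : H' →ₗ[k] H')))) (Nat.lcm r r') ∧
    IsLeast {n : ℕ | 0 < n ∧
      gamma k (H ⊗[k] H')
        (TensorProduct.map (twist k H hS (τ : H →ₗ[k] H))
          (twist k H' hS' (τ' : H' →ₗ[k] H')))
        (n * Nat.lcm r r') = convOne k (H ⊗[k] H')}
      (Nat.lcm (r * e) (r' * e') / Nat.lcm r r') := by
  classical
  -- basic properties of τ, τ'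
  have hτ1 : (τ : H →ₗ[k] H) 1 = 1 := map_one τ
  have hτ'1 : (τ' : H' →ₗ[k] H') 1 = 1 := map_one τ'
  have hτmul : ∀ x y : H, (τ : H →ₗ[k] H) (x * y)
      = (τ : H →ₗ[k] H) x * (τ : H →ₗ[k] H) y := fun x y => map_mul τ x y
  have hτ'mul : ∀ x y : H', (τ' : H' →ₗ[k] H') (x * y)
      = (τ' : H' →ₗ[k] H') x * (τ' : H' →ₗ[k] H') y := fun x y => map_mul τ' x y
  have hτbij : Function.Bijective ⇑(τ : H →ₗ[k] H) := EquivLike.bijective τ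
  have hτ'bij : Function.Bijective ⇑(τ' : H' →ₗ[k] H') := EquivLike.bijective τ'
  -- properties of the twists
  have hT1 : twist k H hS (τ : H →ₗ[k] H) 1 = 1 := twist_one hS _ hτ1
  have hT'1 : twist k H' hS' (τ' : H' →ₗ[k] H') 1 = 1 := twist_one hS' _ hτ'1
  have hTmul : ∀ x y : H, twist k H hS (τ : H →ₗ[k] H) (x * y)
      = twist k H hS (τ : H →ₗ[k] H) x * twist k H hS (τ : H →ₗ[k] H) y :=
    fun x y => twist_mul hS _ hτmul x y
  have hT'mul : ∀ x y : H', twist k H' hS' (τ' : H' →ₗ[k] H') (x * y)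
      = twist k H' hS' (τ' : H' →ₗ[k] H') x * twist k H' hS' (τ' : H' →ₗ[k] H') y :=
    fun x y => twist_mul hS' _ hτ'mul x y
  have hTbij : Function.Bijective (twist k H hS (τ : H →ₗ[k] H)) :=
    twist_bijective hS _ hτbij
  have hT'bij : Function.Bijective (twist k H' hS' (τ' : H' →ₗ[k] H')) :=
    twist_bijective hS' _ hτ'bij
  -- generators of the sets of vanishing indices
  obtain ⟨g, hgpos, hgiff⟩ := exists_generator
    {m | gamma k H (twist k H hS (τ : H →ₗ[k] H)) m = convOne k H} rfl
    (fun m hm n hn => gamma_mem_add _ hTmul hT1 m n hm hn)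
    (fun m hm n hmn => gamma_mem_sub _ hTmul hT1 hTbij m n hm hmn)
    ⟨e * r, Nat.mul_pos he.1.1 hr.1, he.1.2⟩
  obtain ⟨g', hg'pos, hg'iff⟩ := exists_generator
    {m | gamma k H' (twist k H' hS' (τ' : H' →ₗ[k] H')) m = convOne k H'} rfl
    (fun m hm n hn => gamma_mem_add _ hT'mul hT'1 m n hm hn)
    (fun m hm n hmn => gamma_mem_sub _ hT'mul hT'1 hT'bij m n hm hmn)
    ⟨e' * r', Nat.mul_pos he'.1.1 hr'.1, he'.1.2⟩
  -- r e = lcm g r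
  have hset : {n : ℕ | 0 < n ∧
      gamma k H (twist k H hS (τ : H →ₗ[k] H)) (n * r) = convOne k H}
      = {n : ℕ | 0 < n ∧ g ∣ n * r} := by
    ext n
    exact and_congr Iff.rfl (hgiff (n * r))
  have hset' : {n : ℕ | 0 < n ∧
      gamma k H' (twist k H' hS' (τ' : H' →ₗ[k] H')) (n * r') = convOne k H'}
      = {n : ℕ | 0 < n ∧ g' ∣ n * r'} := by
    ext n
    exact and_congr Iff.rfl (hg'iff (n * r'))
  have lre : r * e = Nat.lcm g r := least_mul_eq_lcm hgpos hr.1 (hset ▸ he)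
  have lre' : r' * e' = Nat.lcm g' r' := least_mul_eq_lcm hg'pos hr'.1 (hset' ▸ he')
  have hLpos : 0 < Nat.lcm r r' :=
    Nat.pos_of_ne_zero (Nat.lcm_ne_zero hr.1.ne' hr'.1.ne')
  -- part 1
  refine ⟨?_, ?_, ?_⟩
  · intro x
    induction x using TensorProduct.induction_on with
    | zero => simp
    | tmul a b => simp
    | add x y hx hy =>
      rw [map_add, map_add, hx, hy]
  -- part 2
  · have coeF : ∀ n : ℕ,
        (⇑(TensorProduct.map ((τ : H →ₗ[k] H)) ((τ' : H' →ₗ[k] H'))))^[n]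
        = ⇑(TensorProduct.map ((τ : H →ₗ[k] H) ^ n) ((τ' : H' →ₗ[k] H') ^ n)) := by
      intro n
      rw [← map_pow_eq, Module.End.coe_pow]
    refine ⟨hLpos, ?_, ?_⟩
    · rw [coeF]
      have h1 : (τ : H →ₗ[k] H) ^ Nat.lcm r r' = LinearMap.id := by
        apply LinearMap.ext
        intro x
        rw [Module.End.pow_apply]
        exact congrFun (hasOrder_iterate hr (Nat.dvd_lcm_left r r')) x
      have h2 : (τ' : H' →ₗ[k] H') ^ Nat.lcm r r' = LinearMap.id := by
        apply LinearMap.ext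
        intro x
        rw [Module.End.pow_apply]
        exact congrFun (hasOrder_iterate hr' (Nat.dvd_lcm_right r r')) x
      rw [h1, h2, TensorProduct.map_id]
      rfl
    · intro s hspos hsL hcon
      rw [coeF] at hcon
      have hid : TensorProduct.map ((τ : H →ₗ[k] H) ^ s) ((τ' : H' →ₗ[k] H') ^ s)
          = TensorProduct.map (LinearMap.id) (LinearMap.id) := by
        refine DFunLike.coe_injective ?_
        show ⇑(TensorProduct.map ((τ : H →ₗ[k] H) ^ s) ((τ' : H' →ₗ[k] H') ^ s))
          = ⇑(TensorProduct.map (LinearMap.id (R := k) (M := H))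
            (LinearMap.id (R := k) (M := H')))
        rw [hcon, TensorProduct.map_id]
        rfl
      obtain ⟨hc1, hc2⟩ := map_eq_components _ _ _ _ hid
        (pow_one_eq _ hτ1 s) rfl (pow_one_eq _ hτ'1 s) rfl
      have hrs : r ∣ s := hasOrder_dvd hr (by
        have h3 : (⇑τ)^[s] = ⇑((τ : H →ₗ[k] H) ^ s) := (Module.End.coe_pow _ s).symm
        rw [h3, hc1]
        rfl)
      have hr's : r' ∣ s := hasOrder_dvd hr' (by
        have h3 : (⇑τ')^[s] = ⇑((τ' : H' →ₗ[k] H') ^ s) := (Module.End.coe_pow _ s).symm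
        rw [h3, hc2]
        rfl)
      have : Nat.lcm r r' ≤ s := Nat.le_of_dvd hspos (Nat.lcm_dvd hrs hr's)
      omega
  -- part 3
  · have hmemiff : ∀ m : ℕ,
        (gamma k (H ⊗[k] H')
          (TensorProduct.map (twist k H hS (τ : H →ₗ[k] H))
            (twist k H' hS' (τ' : H' →ₗ[k] H'))) m = convOne k (H ⊗[k] H'))
        ↔ (g ∣ m ∧ g' ∣ m) := by
      intro m
      rw [gamma_tensor, convOne_tensor]
      constructor
      · intro h
        obtain ⟨h1, h2⟩ := map_eq_components _ _ _ _ h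
          (gamma_one_apply _ hT1 m) convOne_one (gamma_one_apply _ hT'1 m) convOne_one
        exact ⟨(hgiff m).mp h1, (hg'iff m).mp h2⟩
      · rintro ⟨h1, h2⟩
        rw [(hgiff m).mpr h1, (hg'iff m).mpr h2]
    have hLK : Nat.lcm r r' ∣ Nat.lcm (Nat.lcm g g') (Nat.lcm r r') := Nat.dvd_lcm_right _ _
    have hn0 : Nat.lcm (Nat.lcm g g') (Nat.lcm r r') / Nat.lcm r r' * Nat.lcm r r'
        = Nat.lcm (Nat.lcm g g') (Nat.lcm r r') := Nat.div_mul_cancel hLK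
    have hKpos : 0 < Nat.lcm (Nat.lcm g g') (Nat.lcm r r') :=
      Nat.pos_of_ne_zero (Nat.lcm_ne_zero
        (Nat.lcm_ne_zero hgpos.ne' hg'pos.ne') hLpos.ne')
    have hvalue : Nat.lcm (r * e) (r' * e') / Nat.lcm r r'
        = Nat.lcm (Nat.lcm g g') (Nat.lcm r r') / Nat.lcm r r' := by
      rw [lre, lre', lcm_lcm_comm]
    rw [hvalue]
    constructor
    · refine ⟨?_, ?_⟩
      · rcases Nat.eq_zero_or_pos (Nat.lcm (Nat.lcm g g') (Nat.lcm r r') / Nat.lcm r r')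
          with h | h
        · rw [h, zero_mul] at hn0
          omega
        · exact h
      · refine (hmemiff _).mpr ⟨?_, ?_⟩
        · rw [hn0]
          exact (Nat.dvd_lcm_left g g').trans (Nat.dvd_lcm_left _ _)
        · rw [hn0]
          exact (Nat.dvd_lcm_right g g').trans (Nat.dvd_lcm_left _ _)
    · rintro n ⟨hnpos, hnmem⟩
      obtain ⟨hd1, hd2⟩ := (hmemiff _).mp hnmem
      have hNd : Nat.lcm (Nat.lcm g g') (Nat.lcm r r') ∣ n * Nat.lcm r r' :=
        Nat.lcm_dvd (Nat.lcm_dvd hd1 hd2) ⟨n, mul_comm n _⟩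
      have hle : Nat.lcm (Nat.lcm g g') (Nat.lcm r r') ≤ n * Nat.lcm r r' :=
        Nat.le_of_dvd (Nat.mul_pos hnpos hLpos) hNd
      apply Nat.le_of_mul_le_mul_right _ hLpos
      rw [hn0]
      exact hle
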